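/- Let κ : ℝ → [0,∞) be a C^∞ function with support contained in (-1,1), ∫ κ = 1, and ∫ u·κ(u) du = 0. For d ≥ 1 define M_d : ℝ^d → ℝ by M_d(t) = ∫_{ℝ^d} max_{1≤j≤d}(t_j + u_j) · ∏_j κ(u_j) du. Then for every t ∈ ℝ^d, max_j t_j ≤ M_d(t) ≤ max_j t_j + 1. -/

import Mathlib

open MeasureTheory

/-- Demailly's regularized maximum: `regMax κ d t = ∫_{ℝ^d} max_j (t_j + u_j) ∏_j κ(u_j) du`. -/
noncomputable def regMax (κ : ℝ → ℝ) (d : ℕ) (t : Fin d → ℝ) : ℝ :=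
  ∫ u : Fin d → ℝ, (⨆ j, (t j + u j)) * ∏ j, κ (u j)

/-- Part (e) of the regularized-maximum lemma: `max t ≤ M_d(t) ≤ max t + 1`. -/
theorem stmt2 (κ : ℝ → ℝ) (hκs : ContDiff ℝ (⊤ : ℕ∞) κ) (hκ0 : ∀ u, 0 ≤ κ u)
    (hκsupp : Function.support κ ⊆ Set.Ioo (-1 : ℝ) 1)
    (hκ1 : ∫ u : ℝ, κ u = 1) (hκm : ∫ u : ℝ, u * κ u = 0)
    (d : ℕ) (hd : 0 < d) :
    ∀ t : Fin d → ℝ, (⨆ j, t j) ≤ regMax κ d t ∧ regMax κ d t ≤ (⨆ j, t j) + 1 := by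
  intro t
  have hne : Nonempty (Fin d) := ⟨⟨0, hd⟩⟩
  set P : (Fin d → ℝ) → ℝ := fun u => ∏ j, κ (u j) with hPdef
  have hκc : Continuous κ := hκs.continuous
  have hPc : Continuous P :=
    continuous_finset_prod _ fun j _ => hκc.comp (continuous_apply j)
  have hP0 : ∀ u, 0 ≤ P u := fun u => Finset.prod_nonneg fun j _ => hκ0 _
  -- compact support considerations
  set K : Set (Fin d → ℝ) := Set.pi Set.univ fun _ : Fin d => Set.Icc (-1 : ℝ) 1 with hKdef
  have hKc : IsCompact K := isCompact_univ_pi fun _ => isCompact_Icc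
  have hPsupp : ∀ u, u ∉ K → P u = 0 := by
    intro u hu
    rw [hKdef, Set.mem_univ_pi] at hu
    push_neg at hu
    obtain ⟨j, hj⟩ := hu
    have : κ (u j) = 0 := by
      by_contra h
      have := hκsupp h
      exact hj ⟨this.1.le, this.2.le⟩
    exact Finset.prod_eq_zero (Finset.mem_univ j) this
  -- generic integrability
  have hint : ∀ g : (Fin d → ℝ) → ℝ, Continuous g → Integrable (fun u => g u * P u) := by
    intro g hg
    refine (hg.mul hPc).integrable_of_hasCompactSupport ?_
    exact HasCompactSupport.intro hKc fun u hu => by rw [Pi.mul_apply, hPsupp u hu, mul_zero]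
  -- sup function continuity
  have hsupeq : ∀ u : Fin d → ℝ, (⨆ j, (t j + u j)) =
      Finset.univ.sup' Finset.univ_nonempty (fun j => t j + u j) := fun u =>
    (Finset.sup'_univ_eq_ciSup _).symm
  have hsupc : Continuous fun u : Fin d → ℝ => ⨆ j, (t j + u j) := by
    simp only [hsupeq]
    exact Continuous.finset_sup'_apply Finset.univ_nonempty fun j _ =>
      continuous_const.add (continuous_apply j)
  have hintSup : Integrable (fun u => (⨆ j, (t j + u j)) * P u) := hint _ hsupc
  -- ∫ P = 1
  have hP1 : ∫ u, P u = 1 := by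
    rw [hPdef]
    rw [MeasureTheory.integral_fintype_prod_volume_eq_prod (ι := Fin d) (f := fun _ x => κ x)]
    simp [hκ1]
  -- ∫ u_j P = 0
  have hPj : ∀ j : Fin d, ∫ u : Fin d → ℝ, u j * P u = 0 := by
    intro j
    set f : Fin d → ℝ → ℝ := fun k x => if k = j then x * κ x else κ x with hfdef
    have hfc : ∀ u : Fin d → ℝ, u j * P u = ∏ k, f k (u k) := by
      intro u
      simp only [hPdef]
      rw [← Finset.mul_prod_erase Finset.univ (fun k => κ (u k)) (Finset.mem_univ j),
        ← Finset.mul_prod_erase Finset.univ (fun k => f k (u k)) (Finset.mem_univ j)]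
      have h1 : f j (u j) = u j * κ (u j) := by simp [hfdef]
      have h2 : ∀ k ∈ Finset.univ.erase j, f k (u k) = κ (u k) := by
        intro k hk
        simp [hfdef, Finset.ne_of_mem_erase hk]
      rw [h1, Finset.prod_congr rfl h2]
      ring
    simp_rw [hfc]
    rw [MeasureTheory.integral_fintype_prod_volume_eq_prod (ι := Fin d) (f := f)]
    refine Finset.prod_eq_zero (Finset.mem_univ j) ?_
    simp [hfdef, hκm]
  -- ∫ (t j + u j) P = t j
  have htj : ∀ j : Fin d, ∫ u : Fin d → ℝ, (t j + u j) * P u = t j := by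
    intro j
    have : ∀ u : Fin d → ℝ, (t j + u j) * P u = t j * P u + u j * P u := fun u => by ring
    simp_rw [this]
    rw [integral_add (hint _ continuous_const) (hint _ (continuous_apply j)),
      integral_const_mul, hP1, hPj j, mul_one, add_zero]
  have hbdd : ∀ u : Fin d → ℝ, BddAbove (Set.range fun j => t j + u j) :=
    fun u => (Set.finite_range _).bddAbove
  constructor
  · refine ciSup_le fun j => ?_
    rw [← htj j]
    refine integral_mono (hint _ (continuous_const.add (continuous_apply j))) hintSup ?_
    intro u
    exact mul_le_mul_of_nonneg_right (le_ciSup (hbdd u) j) (hP0 u)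
  · have key : ∀ u : Fin d → ℝ,
        (⨆ j, (t j + u j)) * P u ≤ ((⨆ j, t j) + 1) * P u := by
      intro u
      rcases eq_or_ne (P u) 0 with h | h
      · rw [h, mul_zero, mul_zero]
      · have hk : ∀ k : Fin d, κ (u k) ≠ 0 := by
          intro k
          exact Finset.prod_ne_zero_iff.mp h k (Finset.mem_univ k)
        have hsup : (⨆ j, (t j + u j)) ≤ (⨆ j, t j) + 1 := by
          refine ciSup_le fun j => ?_
          have h1 : u j < 1 := (hκsupp (hk j)).2
          have h2 : t j ≤ ⨆ k, t k := le_ciSup ((Set.finite_range _).bddAbove) j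
          linarith
        exact mul_le_mul_of_nonneg_right hsup (hP0 u)
    calc regMax κ d t ≤ ∫ u : Fin d → ℝ, ((⨆ j, t j) + 1) * P u :=
          integral_mono hintSup (hint _ continuous_const) key
      _ = (⨆ j, t j) + 1 := by rw [integral_const_mul, hP1, mul_one]
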